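/- Let p be a prime dividing n. The Gram matrix of the np-th cyclotomic Vandermonde matrix satisfies M†_{Φ_{np}} M_{Φ_{np}} = p · (M†_{Φ_n} M_{Φ_n}) ⊗ I_p, where ⊗ denotes the Kronecker product and I_p the p×p identity. -/

import Mathlib

open Finset Matrix Kronecker

/-- The Ramanujan sum `c_n(m) = Σ_{gcd(k,n)=1, 1≤k≤n} exp(2πi·k·m/n)`. -/
noncomputable def ramanujanSum (n : ℕ) (m : ℤ) : ℂ :=
  ∑ k ∈ (Icc 1 n).filter (fun k => Nat.Coprime k n),
    Complex.exp (2 * Real.pi * Complex.I * (k : ℂ) * (m : ℂ) / (n : ℂ))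

/-- The Gram matrix `M†M` of the Vandermonde matrix of the primitive `n`-th roots
of unity; its `(i,j)` entry is the Ramanujan sum `c_n(i-j)`. -/
noncomputable def cycGram (n : ℕ) : Matrix (Fin n.totient) (Fin n.totient) ℂ :=
  fun i j => ramanujanSum n ((i : ℤ) - (j : ℤ))

lemma sum_exp_geom (p : ℕ) (hp : 0 < p) (m : ℤ) :
    ∑ t ∈ range p, Complex.exp (2 * Real.pi * Complex.I * (t : ℂ) * (m : ℂ) / (p : ℂ)) =
      if (p : ℤ) ∣ m then (p : ℂ) else 0 := by
  have hp0 : (p : ℂ) ≠ 0 := Nat.cast_ne_zero.2 hp.ne'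
  set ζ : ℂ := Complex.exp (2 * Real.pi * Complex.I * (m : ℂ) / (p : ℂ)) with hζ
  have hpow : ∀ t : ℕ, Complex.exp (2 * Real.pi * Complex.I * (t : ℂ) * (m : ℂ) / (p : ℂ)) = ζ ^ t := by
    intro t
    rw [hζ, ← Complex.exp_nat_mul]
    ring_nf
  have hζp : ζ ^ p = 1 := by
    rw [hζ, ← Complex.exp_nat_mul]
    have : (p : ℂ) * (2 * Real.pi * Complex.I * (m : ℂ) / (p : ℂ)) = (m : ℂ) * (2 * Real.pi * Complex.I) := by
      field_simp
    rw [this, Complex.exp_int_mul_two_pi_mul_I]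
  have hζ1 : ζ = 1 ↔ (p : ℤ) ∣ m := by
    rw [hζ, Complex.exp_eq_one_iff]
    constructor
    · rintro ⟨k, hk⟩
      refine ⟨k, ?_⟩
      have hπ : (Real.pi : ℂ) ≠ 0 := Complex.ofReal_ne_zero.2 Real.pi_ne_zero
      have : (m : ℂ) = (p : ℂ) * k := by
        field_simp at hk
        have hI : (2 : ℂ) * Real.pi * Complex.I ≠ 0 := by
          simp [Complex.I_ne_zero, hπ]
        -- hk : 2 * π * I * m = k * (2 * π * I) * p
        have := hk
        apply mul_left_cancel₀ hI
        rw [mul_comm ((p:ℂ)) (k:ℂ)] at *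
        linear_combination (2 * Real.pi * Complex.I) * hk
      exact_mod_cast this
    · rintro ⟨k, hk⟩
      refine ⟨k, ?_⟩
      rw [hk]
      push_cast
      field_simp
  simp only [hpow]
  by_cases hd : (p : ℤ) ∣ m
  · simp [hd, hζ1.2 hd]
  · rw [if_neg hd]
    have hne : ζ ≠ 1 := fun h => hd (hζ1.1 h)
    rw [geom_sum_eq hne, hζp]
    simp

lemma sum_reindex (n p : ℕ) (hn : 0 < n) (hp : 0 < p) (f : ℕ → ℂ) :
    ∑ k ∈ (Icc 1 (n * p)).filter (fun k => Nat.Coprime k n), f k =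
      ∑ x ∈ ((Icc 1 n).filter (fun k => Nat.Coprime k n)) ×ˢ range p, f (x.1 + x.2 * n) := by
  refine Finset.sum_nbij' (i := fun k => ((k - 1) % n + 1, (k - 1) / n))
    (j := fun x => x.1 + x.2 * n) ?_ ?_ ?_ ?_ ?_
  · intro k hk
    simp only [mem_filter, mem_Icc] at hk
    obtain ⟨⟨h1, h2⟩, hc⟩ := hk
    simp only [mem_product, mem_filter, mem_Icc, mem_range]
    have hmod : (k - 1) % n < n := Nat.mod_lt _ hn
    refine ⟨⟨⟨by omega, by omega⟩, ?_⟩, ?_⟩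
    · have hk' : k = (k - 1) % n + 1 + (k - 1) / n * n := by
        have := Nat.mod_add_div' (k - 1) n
        omega
      rw [hk'] at hc
      rwa [Nat.coprime_add_mul_right_left] at hc
    · rw [Nat.div_lt_iff_lt_mul hn, Nat.mul_comm]
      omega
  · intro x hx
    simp only [mem_product, mem_filter, mem_Icc, mem_range] at hx
    obtain ⟨⟨⟨h1, h2⟩, hc⟩, ht⟩ := hx
    simp only [mem_filter, mem_Icc]
    refine ⟨⟨by omega, ?_⟩, ?_⟩
    · calc x.1 + x.2 * n ≤ n + (p - 1) * n :=
            Nat.add_le_add h2 (Nat.mul_le_mul_right n (by omega))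
        _ = ((p - 1) + 1) * n := by rw [Nat.succ_mul]; omega
        _ = n * p := by rw [Nat.sub_add_cancel hp, Nat.mul_comm]
    · rwa [Nat.coprime_add_mul_right_left]
  · intro k hk
    simp only [mem_filter, mem_Icc] at hk
    have := Nat.mod_add_div' (k - 1) n
    have hcm : (k - 1) / n * n = n * ((k - 1) / n) := Nat.mul_comm _ _
    dsimp only
    omega
  · intro x hx
    simp only [mem_product, mem_filter, mem_Icc, mem_range] at hx
    obtain ⟨⟨⟨h1, h2⟩, hc⟩, ht⟩ := hx
    have he : x.1 + x.2 * n - 1 = (x.1 - 1) + x.2 * n := by omega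
    have hlt : x.1 - 1 < n := by omega
    ext
    · simp only [he, Nat.add_mul_mod_self_right, Nat.mod_eq_of_lt hlt]
      omega
    · simp only [he, Nat.add_mul_div_right _ _ hn, Nat.div_eq_of_lt hlt]
      omega
  · intro k hk
    simp only [mem_filter, mem_Icc] at hk
    have := Nat.mod_add_div' (k - 1) n
    have hcm : (k - 1) / n * n = n * ((k - 1) / n) := Nat.mul_comm _ _
    dsimp only
    congr 1
    omega

lemma ramanujanSum_mul_prime (n p : ℕ) (hn : 0 < n) (hp : 0 < p) (hpn : p ∣ n) (m : ℤ) :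
    ramanujanSum (n * p) m =
      if (p : ℤ) ∣ m then (p : ℂ) * ramanujanSum n (m / p) else 0 := by
  have hn0 : (n : ℂ) ≠ 0 := Nat.cast_ne_zero.2 hn.ne'
  have hp0 : (p : ℂ) ≠ 0 := Nat.cast_ne_zero.2 hp.ne'
  unfold ramanujanSum
  have hfilter : (Icc 1 (n * p)).filter (fun k => Nat.Coprime k (n * p)) =
      (Icc 1 (n * p)).filter (fun k => Nat.Coprime k n) := by
    apply filter_congr
    intro k _
    constructor
    · exact fun hc => Nat.Coprime.coprime_dvd_right ⟨p, rfl⟩ hc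
    · intro hc
      exact Nat.Coprime.mul_right hc (Nat.Coprime.coprime_dvd_right hpn hc)
  rw [hfilter, sum_reindex n p hn hp, Finset.sum_product]
  have hsplit : ∀ a t : ℕ,
      Complex.exp (2 * Real.pi * Complex.I * ((a + t * n : ℕ) : ℂ) * (m : ℂ) / ((n * p : ℕ) : ℂ)) =
        Complex.exp (2 * Real.pi * Complex.I * (a : ℂ) * (m : ℂ) / ((n * p : ℕ) : ℂ)) *
          Complex.exp (2 * Real.pi * Complex.I * (t : ℂ) * (m : ℂ) / (p : ℂ)) := by
    intro a t
    rw [← Complex.exp_add]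
    congr 1
    push_cast
    field_simp
  simp only [hsplit, ← Finset.mul_sum, sum_exp_geom p hp m]
  by_cases hd : (p : ℤ) ∣ m
  · rw [if_pos hd, if_pos hd, Finset.mul_sum]
    apply Finset.sum_congr rfl
    intro a _
    have hm : (m : ℂ) = (p : ℂ) * ((m / p : ℤ) : ℂ) := by
      obtain ⟨k, hk⟩ := hd
      subst hk
      rw [Int.mul_ediv_cancel_left _ (by exact_mod_cast hp.ne')]
      push_cast; ring
    rw [hm]
    have hnp0 : ((n * p : ℕ) : ℂ) ≠ 0 := by push_cast; exact mul_ne_zero hn0 hp0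
    have : 2 * Real.pi * Complex.I * (a : ℂ) * ((p : ℂ) * ((m / p : ℤ) : ℂ)) / ((n * p : ℕ) : ℂ) =
        2 * Real.pi * Complex.I * (a : ℂ) * ((m / p : ℤ) : ℂ) / (n : ℂ) := by
      rw [div_eq_div_iff hnp0 hn0]
      push_cast
      ring
    rw [this]
    ring
  · rw [if_neg hd, if_neg hd]
    simp

theorem cycGram_mul_prime_kronecker (n p : ℕ) (hn : 0 < n) (hp : p.Prime)
    (hpn : p ∣ n) (h : Nat.totient (n * p) = Nat.totient n * p) :
    ∀ i j : Fin (Nat.totient (n * p)),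
      cycGram (n * p) i j =
        (p : ℂ) * (cycGram n ⊗ₖ (1 : Matrix (Fin p) (Fin p) ℂ))
          (finProdFinEquiv.symm (Fin.cast h i)) (finProdFinEquiv.symm (Fin.cast h j)) := by
  intro i j
  have hp1 : 0 < p := hp.pos
  simp only [finProdFinEquiv_symm_apply, kroneckerMap_apply, cycGram]
  have hi : (i : ℕ) = (i : ℕ) % p + p * ((i : ℕ) / p) := (Nat.mod_add_div _ _).symm
  have hj : (j : ℕ) = (j : ℕ) % p + p * ((j : ℕ) / p) := (Nat.mod_add_div _ _).symm
  have hdivNat : ∀ k : Fin (Nat.totient (n * p)),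
      (((Fin.cast h k).divNat : ℕ) = (k : ℕ) / p ∧ ((Fin.cast h k).modNat : ℕ) = (k : ℕ) % p) := by
    intro k
    exact ⟨rfl, rfl⟩
  obtain ⟨hdi, hmi⟩ := hdivNat i
  obtain ⟨hdj, hmj⟩ := hdivNat j
  by_cases heq : (i : ℕ) % p = (j : ℕ) % p
  · have hmeq : (Fin.cast h i).modNat = (Fin.cast h j).modNat := by
      ext; rw [hmi, hmj, heq]
    rw [hmeq, Matrix.one_apply_eq]
    have hm : ((i : ℤ) - (j : ℤ)) = (p : ℤ) * (((i : ℕ) / p : ℕ) - ((j : ℕ) / p : ℕ) : ℤ) := by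
      have h1 : (((i : ℕ) : ℤ)) = (((i : ℕ) % p : ℕ) : ℤ) + (p : ℤ) * (((i : ℕ) / p : ℕ) : ℤ) := by
        exact_mod_cast (Nat.mod_add_div (i : ℕ) p).symm
      have h2 : (((j : ℕ) : ℤ)) = (((j : ℕ) % p : ℕ) : ℤ) + (p : ℤ) * (((j : ℕ) / p : ℕ) : ℤ) := by
        exact_mod_cast (Nat.mod_add_div (j : ℕ) p).symm
      have h3 : (((i : ℕ) % p : ℕ) : ℤ) = (((j : ℕ) % p : ℕ) : ℤ) := by exact_mod_cast heq
      push_cast at h1 h2 h3 ⊢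
      linear_combination h1 - h2 + h3
    rw [hm, ramanujanSum_mul_prime n p hn hp1 hpn]
    rw [if_pos ⟨_, rfl⟩, Int.mul_ediv_cancel_left _ (by exact_mod_cast hp1.ne')]
    rw [hdi, hdj]
    push_cast
    ring
  · have hmne : (Fin.cast h i).modNat ≠ (Fin.cast h j).modNat := by
      intro hc
      apply heq
      have := congrArg Fin.val hc
      rwa [hmi, hmj] at this
    rw [Matrix.one_apply_ne hmne, mul_zero, mul_zero]
    rw [ramanujanSum_mul_prime n p hn hp1 hpn, if_neg]
    intro hd
    have hd2 : (p : ℤ) ∣ (((i : ℕ) % p : ℕ) - ((j : ℕ) % p : ℕ) : ℤ) := by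
      have : ((i : ℤ) - (j : ℤ)) = (((i : ℕ) % p : ℕ) - ((j : ℕ) % p : ℕ) : ℤ) +
          (p : ℤ) * ((((i : ℕ) / p : ℕ) : ℤ) - (((j : ℕ) / p : ℕ) : ℤ)) := by
        have h1 : (((i : ℕ) : ℤ)) = (((i : ℕ) % p : ℕ) : ℤ) + (p : ℤ) * (((i : ℕ) / p : ℕ) : ℤ) := by
          exact_mod_cast (Nat.mod_add_div (i : ℕ) p).symm
        have h2 : (((j : ℕ) : ℤ)) = (((j : ℕ) % p : ℕ) : ℤ) + (p : ℤ) * (((j : ℕ) / p : ℕ) : ℤ) := by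
          exact_mod_cast (Nat.mod_add_div (j : ℕ) p).symm
        push_cast at h1 h2 ⊢
        linear_combination h1 - h2
      rw [this] at hd
      exact (Int.dvd_add_right ⟨_, rfl⟩).1 (by rwa [add_comm] at hd)
    have h0 : (((i : ℕ) % p : ℕ) - ((j : ℕ) % p : ℕ) : ℤ) = 0 := by
      apply Int.eq_zero_of_abs_lt_dvd hd2
      have h1 : (i : ℕ) % p < p := Nat.mod_lt _ hp1
      have h2 : (j : ℕ) % p < p := Nat.mod_lt _ hp1
      rw [abs_lt]
      constructor <;> [push_cast; push_cast] <;> omega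
    apply heq
    omega
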